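/- Let $T_n$ be the $n\times n$ pentadiagonal Toeplitz matrix with diagonals $(1,-4,6,-4,1)$ (symbol $|1-t|^4$). Then the $(1,n)$ entry of $T_n^{-1}$ equals $\frac{2n}{(n+2)(n+3)}$ and the $(n,n)$ entry of $T_n^{-1}$ equals $\frac{n(n+1)}{(n+2)(n+3)}$. -/

import Mathlib

set_option maxHeartbeats 1000000

/-- Numerator polynomial for the entries of the inverse (1-indexed, valid for `i ≤ j`). -/
noncomputable def Pg (n i j : ℝ) : ℝ :=
  (n+1)*(n+2)*(n+3)*(i - i^3) + (3*n^3+12*n^2+12*n+1)*i*j - 6*(n+1)*(n+2)*i*j^2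
  + (3*n+5)*i*j^3 + 3*(n+1)^2*(n+2)*i^2*j - 3*(2*n+3)*(n+1)*i^2*j^2
  + 3*(n+1)*i^2*j^3 + (3*n+5)*i^3*j + 3*(n+1)*i^3*j^2 - 2*i^3*j^3

/-- The (extended) Green's function: candidate inverse entries. -/
noncomputable def mg (n : ℕ) (i j : ℤ) : ℝ :=
  (if i ≤ j then Pg n i j else Pg n j i) / (6*((n:ℝ)+1)*((n:ℝ)+2)*((n:ℝ)+3))

lemma mg_zero (n : ℕ) (b : ℤ) (hb : 0 ≤ b) : mg n 0 b = 0 := by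
  rw [mg, if_pos hb]
  have : Pg n ((0:ℤ):ℝ) b = 0 := by simp only [Pg]; push_cast; ring
  rw [this, zero_div]

lemma mg_neg_one (n : ℕ) (b : ℤ) (hb : (-1:ℤ) ≤ b) : mg n (-1) b = 0 := by
  rw [mg, if_pos hb]
  have : Pg n (((-1):ℤ):ℝ) b = 0 := by simp only [Pg]; push_cast; ring
  rw [this, zero_div]

lemma mg_top1 (n : ℕ) (b : ℤ) (hb : b ≤ (n:ℤ)) : mg n ((n:ℤ)+1) b = 0 := by
  rw [mg, if_neg (by omega)]
  have : Pg n b (((n:ℤ)+1 : ℤ):ℝ) = 0 := by simp only [Pg]; push_cast; ring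
  rw [this, zero_div]

lemma mg_top2 (n : ℕ) (b : ℤ) (hb : b ≤ (n:ℤ)) : mg n ((n:ℤ)+2) b = 0 := by
  rw [mg, if_neg (by omega)]
  have : Pg n b (((n:ℤ)+2 : ℤ):ℝ) = 0 := by simp only [Pg]; push_cast; ring
  rw [this, zero_div]

lemma key (n : ℕ) (i b : ℤ) (hb : 1 ≤ b) (hb2 : b ≤ (n:ℤ)) :
    mg n (i-1) b - 4 * mg n i b + 6 * mg n (i+1) b - 4 * mg n (i+2) b + mg n (i+3) b
      = if i + 1 = b then 1 else 0 := by
  have h1 : ((n:ℝ)+1) ≠ 0 := by positivity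
  have h2 : ((n:ℝ)+2) ≠ 0 := by positivity
  have h3 : ((n:ℝ)+3) ≠ 0 := by positivity
  rcases (by omega : (i+3 ≤ b) ∨ b = i + 2 ∨ b = i + 1 ∨ b = i ∨ b = i - 1 ∨ b ≤ i - 2)
    with h | h | h | h | h | h
  · simp only [mg]
    rw [if_pos (show i-1 ≤ b by omega), if_pos (show i ≤ b by omega),
      if_pos (show i+1 ≤ b by omega), if_pos (show i+2 ≤ b by omega),
      if_pos (show i+3 ≤ b by omega)]
    split_ifs with hsp <;>
      first
      | (exfalso; omega)
      | (simp only [Pg]; field_simp; push_cast; ring)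
  · rw [h]
    simp only [mg]
    rw [if_pos (show i-1 ≤ i+2 by omega), if_pos (show i ≤ i+2 by omega),
      if_pos (show i+1 ≤ i+2 by omega), if_pos (show i+2 ≤ i+2 by omega),
      if_neg (show ¬ i+3 ≤ i+2 by omega)]
    split_ifs with hsp <;>
      first
      | (exfalso; omega)
      | (simp only [Pg]; field_simp; push_cast; ring)
  · rw [h]
    simp only [mg]
    rw [if_pos (show i-1 ≤ i+1 by omega), if_pos (show i ≤ i+1 by omega),
      if_pos (show i+1 ≤ i+1 by omega), if_neg (show ¬ i+2 ≤ i+1 by omega),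
      if_neg (show ¬ i+3 ≤ i+1 by omega)]
    split_ifs with hsp <;>
      first
      | (exfalso; omega)
      | (simp only [Pg]; field_simp; push_cast; ring)
  · rw [h]
    simp only [mg]
    rw [if_pos (show i-1 ≤ i by omega), if_pos (show i ≤ i from le_rfl),
      if_neg (show ¬ i+1 ≤ i by omega), if_neg (show ¬ i+2 ≤ i by omega),
      if_neg (show ¬ i+3 ≤ i by omega)]
    split_ifs with hsp <;>
      first
      | (exfalso; omega)
      | (simp only [Pg]; field_simp; push_cast; ring)
  · rw [h]
    simp only [mg]
    rw [if_pos (show i-1 ≤ i-1 from le_rfl), if_neg (show ¬ i ≤ i-1 by omega),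
      if_neg (show ¬ i+1 ≤ i-1 by omega), if_neg (show ¬ i+2 ≤ i-1 by omega),
      if_neg (show ¬ i+3 ≤ i-1 by omega)]
    split_ifs with hsp <;>
      first
      | (exfalso; omega)
      | (simp only [Pg]; field_simp; push_cast; ring)
  · simp only [mg]
    rw [if_neg (show ¬ i-1 ≤ b by omega), if_neg (show ¬ i ≤ b by omega),
      if_neg (show ¬ i+1 ≤ b by omega), if_neg (show ¬ i+2 ≤ b by omega),
      if_neg (show ¬ i+3 ≤ b by omega)]
    split_ifs with hsp <;>
      first
      | (exfalso; omega)
      | (simp only [Pg]; field_simp; push_cast; ring)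

theorem stmt_11 (n : ℕ) (hn : 1 ≤ n)
    (T : Matrix (Fin n) (Fin n) ℝ)
    (hT : ∀ i j : Fin n, T i j =
      if (i : ℤ) = (j : ℤ) then 6
      else if |(i : ℤ) - (j : ℤ)| = 1 then -4
      else if |(i : ℤ) - (j : ℤ)| = 2 then 1
      else 0) :
    T⁻¹ ⟨0, by omega⟩ ⟨n - 1, by omega⟩ = 2 * (n : ℝ) / (((n : ℝ) + 2) * ((n : ℝ) + 3)) ∧
    T⁻¹ ⟨n - 1, by omega⟩ ⟨n - 1, by omega⟩ =
      (n : ℝ) * ((n : ℝ) + 1) / (((n : ℝ) + 2) * ((n : ℝ) + 3)) := by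
  have h1 : ((n:ℝ)+1) ≠ 0 := by positivity
  have h2 : ((n:ℝ)+2) ≠ 0 := by positivity
  have h3 : ((n:ℝ)+3) ≠ 0 := by positivity
  set M : Matrix (Fin n) (Fin n) ℝ :=
    Matrix.of (fun i j : Fin n => mg n ((i:ℤ)+1) ((j:ℤ)+1)) with hMdef
  have hTM : T * M = 1 := by
    ext i j
    rw [Matrix.mul_apply, Matrix.one_apply]
    have hjlt := j.isLt
    have hilt := i.isLt
    have hj1 : (1:ℤ) ≤ (j:ℤ)+1 := by omega
    have hj2 : (j:ℤ)+1 ≤ (n:ℤ) := by omega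
    set f : ℤ → ℝ := fun x =>
      (if (i:ℤ) = x then (6:ℝ) else if |(i:ℤ) - x| = 1 then -4
        else if |(i:ℤ) - x| = 2 then 1 else 0) * mg n (x+1) ((j:ℤ)+1) with hf
    have step1 : (∑ k : Fin n, T i k * M k j) = ∑ x ∈ Finset.range n, f (x:ℤ) := by
      rw [← Fin.sum_univ_eq_sum_range (fun x : ℕ => f (x:ℤ)) n]
      refine Finset.sum_congr rfl fun k _ => ?_
      rw [hT]
      simp only [hf, hMdef, Matrix.of_apply]
    have himg : Finset.Icc (0:ℤ) ((n:ℤ)-1)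
        = Finset.image (fun x : ℕ => (x:ℤ)) (Finset.range n) := by
      ext x
      simp only [Finset.mem_Icc, Finset.mem_image, Finset.mem_range]
      constructor
      · intro hx; exact ⟨x.toNat, by omega, by omega⟩
      · rintro ⟨a, ha, rfl⟩; omega
    have step2 : (∑ x ∈ Finset.range n, f (x:ℤ)) = ∑ x ∈ Finset.Icc (0:ℤ) ((n:ℤ)-1), f x := by
      rw [himg, Finset.sum_image (by intro a _ b _ hab; exact_mod_cast (show (a:ℤ) = b from hab))]
    have step3 : (∑ x ∈ Finset.Icc (0:ℤ) ((n:ℤ)-1), f x)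
        = ∑ x ∈ Finset.Icc (-2:ℤ) ((n:ℤ)+1), f x := by
      refine Finset.sum_subset (fun x hx => ?_) (fun x hx hnx => ?_)
      · simp only [Finset.mem_Icc] at *; omega
      · simp only [Finset.mem_Icc] at hx hnx
        have hz : mg n (x+1) ((j:ℤ)+1) = 0 := by
          rcases (by omega : x = -2 ∨ x = -1 ∨ x = (n:ℤ) ∨ x = (n:ℤ)+1) with h | h | h | h
          · rw [h, show (-2:ℤ)+1 = -1 from by norm_num]; exact mg_neg_one n _ (by omega)
          · rw [h, show (-1:ℤ)+1 = 0 from by norm_num]; exact mg_zero n _ (by omega)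
          · rw [h]; exact mg_top1 n _ hj2
          · rw [h, show ((n:ℤ)+1)+1 = (n:ℤ)+2 from by ring]; exact mg_top2 n _ hj2
        simp only [hf, hz, mul_zero]
    have hi1 : (0:ℤ) ≤ (i:ℤ) := by omega
    have hi2 : (i:ℤ) ≤ (n:ℤ)-1 := by omega
    have step4 : (∑ x ∈ Finset.Icc (-2:ℤ) ((n:ℤ)+1), f x)
        = ∑ x ∈ Finset.Icc ((i:ℤ)-2) ((i:ℤ)+2), f x := by
      refine (Finset.sum_subset (fun x hx => ?_) (fun x hx hnx => ?_)).symm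
      · simp only [Finset.mem_Icc] at *; omega
      · simp only [Finset.mem_Icc] at hx hnx
        have c1 : ¬ ((i:ℤ) = x) := by omega
        have c2 : ¬ (|(i:ℤ) - x| = 1) := by rw [Int.abs_eq_natAbs]; omega
        have c3 : ¬ (|(i:ℤ) - x| = 2) := by rw [Int.abs_eq_natAbs]; omega
        simp only [hf, c1, c2, c3, if_false, zero_mul]
    have hset : Finset.Icc ((i:ℤ)-2) ((i:ℤ)+2)
        = ({(i:ℤ)-2, (i:ℤ)-1, (i:ℤ), (i:ℤ)+1, (i:ℤ)+2} : Finset ℤ) := by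
      ext x
      simp only [Finset.mem_Icc, Finset.mem_insert, Finset.mem_singleton]
      omega
    have e1 : f ((i:ℤ)-2) = mg n ((i:ℤ)-1) ((j:ℤ)+1) := by
      have c1 : ¬ ((i:ℤ) = (i:ℤ)-2) := by omega
      have c2 : ¬ (|(i:ℤ) - ((i:ℤ)-2)| = 1) := by rw [Int.abs_eq_natAbs]; omega
      have c3 : (|(i:ℤ) - ((i:ℤ)-2)| = 2) := by rw [Int.abs_eq_natAbs]; omega
      simp only [hf]
      rw [if_neg c1, if_neg c2, if_pos c3, one_mul,
        show ((i:ℤ)-2+1) = (i:ℤ)-1 from by ring]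
    have e2 : f ((i:ℤ)-1) = -4 * mg n (i:ℤ) ((j:ℤ)+1) := by
      have c1 : ¬ ((i:ℤ) = (i:ℤ)-1) := by omega
      have c2 : (|(i:ℤ) - ((i:ℤ)-1)| = 1) := by rw [Int.abs_eq_natAbs]; omega
      simp only [hf]
      rw [if_neg c1, if_pos c2, show ((i:ℤ)-1+1) = (i:ℤ) from by ring]
    have e3 : f (i:ℤ) = 6 * mg n ((i:ℤ)+1) ((j:ℤ)+1) := by
      simp only [hf]; simp
    have e4 : f ((i:ℤ)+1) = -4 * mg n ((i:ℤ)+2) ((j:ℤ)+1) := by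
      have c1 : ¬ ((i:ℤ) = (i:ℤ)+1) := by omega
      have c2 : (|(i:ℤ) - ((i:ℤ)+1)| = 1) := by rw [Int.abs_eq_natAbs]; omega
      simp only [hf]
      rw [if_neg c1, if_pos c2, show ((i:ℤ)+1+1) = (i:ℤ)+2 from by ring]
    have e5 : f ((i:ℤ)+2) = mg n ((i:ℤ)+3) ((j:ℤ)+1) := by
      have c1 : ¬ ((i:ℤ) = (i:ℤ)+2) := by omega
      have c2 : ¬ (|(i:ℤ) - ((i:ℤ)+2)| = 1) := by rw [Int.abs_eq_natAbs]; omega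
      have c3 : (|(i:ℤ) - ((i:ℤ)+2)| = 2) := by rw [Int.abs_eq_natAbs]; omega
      simp only [hf]
      rw [if_neg c1, if_neg c2, if_pos c3, one_mul,
        show ((i:ℤ)+2+1) = (i:ℤ)+3 from by ring]
    have hsum5 : (∑ x ∈ Finset.Icc ((i:ℤ)-2) ((i:ℤ)+2), f x)
        = f ((i:ℤ)-2) + f ((i:ℤ)-1) + f (i:ℤ) + f ((i:ℤ)+1) + f ((i:ℤ)+2) := by
      rw [hset]
      have nm : ∀ (a : ℤ) (s : Finset ℤ), (∀ x ∈ s, x ≠ a) → a ∉ s :=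
        fun a s h hmem => h a hmem rfl
      rw [Finset.sum_insert (by
            intro hmem; simp only [Finset.mem_insert, Finset.mem_singleton] at hmem; omega),
        Finset.sum_insert (by
            intro hmem; simp only [Finset.mem_insert, Finset.mem_singleton] at hmem; omega),
        Finset.sum_insert (by
            intro hmem; simp only [Finset.mem_insert, Finset.mem_singleton] at hmem; omega),
        Finset.sum_insert (by
            intro hmem; simp only [Finset.mem_singleton] at hmem; omega),
        Finset.sum_singleton]
      ring
    have hrhs : (if i = j then (1:ℝ) else 0)
        = (if (i:ℤ) + 1 = (j:ℤ) + 1 then (1:ℝ) else 0) := by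
      rcases eq_or_ne i j with h | h
      · simp [h]
      · rw [if_neg h, if_neg (fun hc => h (Fin.ext (by omega)))]
    rw [step1, step2, step3, step4, hsum5, e1, e2, e3, e4, e5, hrhs]
    have hk := key n (i:ℤ) ((j:ℤ)+1) hj1 hj2
    linear_combination hk
  have hinv : T⁻¹ = M := Matrix.inv_eq_right_inv hTM
  rw [hinv]
  have hc0 : (((⟨0, by omega⟩ : Fin n) : ℤ)) = 0 := by
    show ((0:ℕ):ℤ) = 0; norm_num
  have hc1 : (((⟨n-1, by omega⟩ : Fin n) : ℤ)) = (n:ℤ) - 1 := by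
    show ((n-1:ℕ):ℤ) = (n:ℤ) - 1; omega
  constructor
  · show mg n (((⟨0, by omega⟩ : Fin n) : ℤ)+1) (((⟨n-1, by omega⟩ : Fin n) : ℤ)+1) = _
    rw [hc0, hc1, show ((n:ℤ) - 1 + 1) = (n:ℤ) from by ring,
      show ((0:ℤ)+1) = 1 from by norm_num]
    rw [mg, if_pos (by omega : (1:ℤ) ≤ (n:ℤ))]
    simp only [Pg]
    push_cast
    field_simp
    ring
  · show mg n (((⟨n-1, by omega⟩ : Fin n) : ℤ)+1) (((⟨n-1, by omega⟩ : Fin n) : ℤ)+1) = _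
    rw [hc1, show ((n:ℤ) - 1 + 1) = (n:ℤ) from by ring]
    rw [mg, if_pos le_rfl]
    simp only [Pg]
    push_cast
    field_simp
    ring
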